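/- Let k ≥ 1 and let v : ZMod (2k+1) → EuclideanSpace ℝ (Fin 2) be the vertices of the regular (2k+1)-gon inscribed in the unit circle, i.e. v j = (cos (2π j / (2k+1)), sin (2π j / (2k+1))) for j = 0, 1, …, 2k. Then for every nonempty set S ⊆ ZMod (2k+1), one has 0 ∈ intrinsicInterior ℝ (convexHull ℝ (v '' S)) if and only if there is no i ∈ ZMod (2k+1) with S ⊆ {i, i+1, …, i+k} (that is, S is not contained in any set of k+1 cyclically consecutive indices). -/

import Mathlib

open Real

private lemma cosmod (n M : ℕ) (hn : 0 < n) :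
    cos (2*π*((M % n : ℕ):ℝ)/n) = cos (2*π*(M:ℝ)/n) ∧
    sin (2*π*((M % n : ℕ):ℝ)/n) = sin (2*π*(M:ℝ)/n) := by
  have hne : (n:ℝ) ≠ 0 := Nat.cast_ne_zero.mpr hn.ne'
  obtain ⟨q, r, hrn, rfl⟩ : ∃ q r, r < n ∧ M = n * q + r :=
    ⟨M / n, M % n, Nat.mod_lt _ hn, (Nat.div_add_mod M n).symm⟩
  have h1 : (n * q + r) % n = r := by
    simp [Nat.mod_eq_of_lt hrn, Nat.mul_add_mod]
  have key : (2*π*((n*q+r:ℕ):ℝ)/n) = 2*π*((r:ℕ):ℝ)/n + (q:ℤ) * (2*π) := by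
    field_simp
    push_cast
    ring
  rw [h1, key, Real.cos_add_int_mul_two_pi, Real.sin_add_int_mul_two_pi]
  exact ⟨rfl, rfl⟩

private lemma vshift {k : ℕ} (hk : 1 ≤ k)
    (v : ZMod (2 * k + 1) → EuclideanSpace ℝ (Fin 2))
    (hv : ∀ j : ZMod (2 * k + 1),
      v j = (WithLp.equiv 2 (Fin 2 → ℝ)).symm
        ![Real.cos (2 * π * (j.val : ℝ) / (2 * (k : ℝ) + 1)),
          Real.sin (2 * π * (j.val : ℝ) / (2 * (k : ℝ) + 1))])
    (a : ZMod (2 * k + 1)) (m : ℕ) :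
    v (a + (m : ZMod (2 * k + 1))) = (WithLp.equiv 2 (Fin 2 → ℝ)).symm
        ![Real.cos (2 * π * ((a.val + m : ℕ) : ℝ) / (2 * (k : ℝ) + 1)),
          Real.sin (2 * π * ((a.val + m : ℕ) : ℝ) / (2 * (k : ℝ) + 1))] := by
  have hn : 0 < 2 * k + 1 := by omega
  haveI : NeZero (2 * k + 1) := ⟨by omega⟩
  have hval : (a + (m : ZMod (2 * k + 1))).val = (a.val + m) % (2 * k + 1) := by
    rw [ZMod.val_add, ZMod.val_natCast]; conv_rhs => rw [Nat.add_mod]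
    simp [Nat.mod_mod_of_dvd]
  rw [hv, hval]
  have hc := cosmod (2*k+1) (a.val + m) hn
  have hcast : ((2*k+1 : ℕ):ℝ) = 2*(k:ℝ)+1 := by push_cast; ring
  rw [hcast] at hc
  rw [hc.1, hc.2]

private lemma easy {k : ℕ} (hk : 1 ≤ k)
    (v : ZMod (2 * k + 1) → EuclideanSpace ℝ (Fin 2))
    (hv : ∀ j : ZMod (2 * k + 1), v j = (WithLp.equiv 2 (Fin 2 → ℝ)).symm
        ![Real.cos (2 * π * (j.val : ℝ) / (2 * (k : ℝ) + 1)),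
          Real.sin (2 * π * (j.val : ℝ) / (2 * (k : ℝ) + 1))])
    (vshift : ∀ (a : ZMod (2 * k + 1)) (m : ℕ),
      v (a + (m : ZMod (2 * k + 1))) = (WithLp.equiv 2 (Fin 2 → ℝ)).symm
        ![Real.cos (2 * π * ((a.val + m : ℕ) : ℝ) / (2 * (k : ℝ) + 1)),
          Real.sin (2 * π * ((a.val + m : ℕ) : ℝ) / (2 * (k : ℝ) + 1))])
    (S : Set (ZMod (2 * k + 1)))
    (h0 : (0:EuclideanSpace ℝ (Fin 2)) ∈ convexHull ℝ (v '' S))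
    (i : ZMod (2 * k + 1))
    (hi : S ⊆ {j : ZMod (2 * k + 1) | ∃ ℓ : ℕ, ℓ ≤ k ∧ j = i + (ℓ : ZMod (2 * k + 1))}) :
    False := by
  set N : ℝ := 2 * (k:ℝ) + 1 with hN
  have hNpos : (0:ℝ) < N := by positivity
  set ψ : ℝ := 2 * π * (i.val : ℝ) / N + π * k / N with hψ
  set f : EuclideanSpace ℝ (Fin 2) → ℝ := fun x => cos ψ * x 0 + sin ψ * x 1 with hf
  have hlin : IsLinearMap ℝ f := by
    constructor
    · intro x y; simp [hf]; ring
    · intro c x; simp [hf, smul_eq_mul]; ring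
  have hconv : Convex ℝ {x : EuclideanSpace ℝ (Fin 2) | 0 < f x} := convex_halfSpace_gt hlin 0
  have hsub : v '' S ⊆ {x | 0 < f x} := by
    rintro _ ⟨j, hj, rfl⟩
    obtain ⟨ℓ, hℓ, rfl⟩ := hi hj
    rw [vshift i ℓ]
    have hcoord : f ((WithLp.equiv 2 (Fin 2 → ℝ)).symm
        ![cos (2 * π * ((i.val + ℓ : ℕ) : ℝ) / N), sin (2 * π * ((i.val + ℓ : ℕ) : ℝ) / N)])
        = cos (2 * π * ((i.val + ℓ : ℕ) : ℝ) / N - ψ) := by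
      simp [hf, Real.cos_sub]
      ring
    rw [Set.mem_setOf_eq, hcoord]
    have harg : 2 * π * ((i.val + ℓ : ℕ) : ℝ) / N - ψ = π * (2 * (ℓ:ℝ) - k) / N := by
      rw [hψ]; push_cast; field_simp; ring
    rw [harg]
    apply Real.cos_pos_of_mem_Ioo
    constructor
    · rw [neg_lt, ← neg_div, ← neg_mul]
      rw [div_lt_div_iff₀ hNpos two_pos]
      have : (2*(ℓ:ℝ) - k) ≥ -(k:ℝ) := by
        have : (0:ℝ) ≤ (ℓ:ℝ) := Nat.cast_nonneg _
        linarith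
      nlinarith [Real.pi_pos, Nat.cast_nonneg (α := ℝ) ℓ]
    · rw [div_lt_div_iff₀ hNpos two_pos]
      have hl : (ℓ:ℝ) ≤ k := Nat.cast_le.mpr hℓ
      nlinarith [Real.pi_pos]
  have := convexHull_min hsub hconv h0
  simp [hf] at this

private lemma comb {k : ℕ} (hk : 1 ≤ k) (S : Set (ZMod (2 * k + 1))) (hS : S.Nonempty)
    (hnc : ¬ ∃ i : ZMod (2 * k + 1),
      S ⊆ {j : ZMod (2 * k + 1) | ∃ ℓ : ℕ, ℓ ≤ k ∧ j = i + (ℓ : ZMod (2 * k + 1))}) :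
    ∃ (a : ZMod (2 * k + 1)) (t d : ℕ), a ∈ S ∧ a + (t : ZMod (2*k+1)) ∈ S ∧
      a + (d : ZMod (2*k+1)) ∈ S ∧ 1 ≤ t ∧ t ≤ k ∧ 1 ≤ d - t ∧ d - t ≤ k ∧
      1 ≤ 2*k+1 - d ∧ 2*k+1 - d ≤ k ∧ t < d ∧ d ≤ 2*k := by
  haveI : NeZero (2 * k + 1) := ⟨by omega⟩
  obtain ⟨a, ha⟩ := hS
  push_neg at hnc
  -- existence of some d in [k+1, 2k] with a + d ∈ S
  have hex : ∃ d : ℕ, k + 1 ≤ d ∧ d ≤ 2*k ∧ a + (d : ZMod (2*k+1)) ∈ S := by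
    by_contra hcon
    push_neg at hcon
    refine absurd (hnc a) ?_
    push_neg
    intro s hs
    set e := (s - a).val with he
    have hlt : e < 2*k+1 := ZMod.val_lt _
    have hse : s = a + (e : ZMod (2*k+1)) := by
      rw [he, ZMod.natCast_val, ZMod.cast_id]; ring
    rcases le_or_gt e k with h | h
    · exact ⟨e, h, hse⟩
    · exact absurd (hse ▸ hs) (hcon e (by omega) (by omega))
  -- minimal such d
  classical
  set d := Nat.find hex with hd
  obtain ⟨hd1, hd2, hbS⟩ := Nat.find_spec hex
  set b := a + (d : ZMod (2*k+1)) with hb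
  -- S not contained in consecutive set starting at b
  obtain ⟨c, hcS, hc⟩ := Set.not_subset.mp (hnc b)
  simp only [Set.mem_setOf_eq, not_exists, not_and] at hc
  set t := (c - a).val with ht
  have htlt : t < 2*k+1 := ZMod.val_lt _
  have hct : c = a + (t : ZMod (2*k+1)) := by
    rw [ht, ZMod.natCast_val, ZMod.cast_id]; ring
  have htk : t ≤ k := by
    by_contra hcon
    push_neg at hcon
    have htT : d ≤ t := Nat.find_min' hex ⟨hcon, by omega, hct ▸ hcS⟩
    refine hc (t - d) (by omega) ?_
    rw [hct, hb]
    rw [Nat.cast_sub htT]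
    ring
  have ht1 : 1 ≤ t := by
    rcases Nat.eq_zero_or_pos t with h | h
    · exfalso
      refine hc (2*k+1 - d) (by omega) ?_
      rw [hct, hb, h, Nat.cast_sub (by omega), Nat.cast_zero, add_zero]
      have : ((2*k+1 : ℕ) : ZMod (2*k+1)) = 0 := by
        simp [ZMod.natCast_self]
      rw [this]
      ring
    · exact h
  have hdt : d - t ≤ k := by
    by_contra hcon
    push_neg at hcon
    refine hc (2*k+1 - (d - t)) (by omega) ?_
    rw [hct, hb, Nat.cast_sub (show d - t ≤ 2*k+1 by omega), Nat.cast_sub (show t ≤ d by omega)]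
    have : ((2*k+1 : ℕ) : ZMod (2*k+1)) = 0 := by simp [ZMod.natCast_self]
    rw [this]
    ring
  exact ⟨a, t, d, ha, hct ▸ hcS, hbS, ht1, htk, by omega, hdt, by omega, by omega, by omega, hd2⟩

private lemma geom {k : ℕ} (hk : 1 ≤ k)
    (v : ZMod (2 * k + 1) → EuclideanSpace ℝ (Fin 2))
    (hv : ∀ j : ZMod (2 * k + 1), v j = (WithLp.equiv 2 (Fin 2 → ℝ)).symm
        ![Real.cos (2 * π * (j.val : ℝ) / (2 * (k : ℝ) + 1)),
          Real.sin (2 * π * (j.val : ℝ) / (2 * (k : ℝ) + 1))])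
    (vshift : ∀ (a : ZMod (2 * k + 1)) (m : ℕ),
      v (a + (m : ZMod (2 * k + 1))) = (WithLp.equiv 2 (Fin 2 → ℝ)).symm
        ![Real.cos (2 * π * ((a.val + m : ℕ) : ℝ) / (2 * (k : ℝ) + 1)),
          Real.sin (2 * π * ((a.val + m : ℕ) : ℝ) / (2 * (k : ℝ) + 1))])
    (S : Set (ZMod (2 * k + 1))) (a : ZMod (2 * k + 1)) (t d : ℕ)
    (ha : a ∈ S) (hc : a + (t : ZMod (2*k+1)) ∈ S) (hb : a + (d : ZMod (2*k+1)) ∈ S)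
    (ht1 : 1 ≤ t) (htk : t ≤ k) (hdt1 : 1 ≤ d - t) (hdtk : d - t ≤ k)
    (hnd1 : 1 ≤ 2*k+1 - d) (hndk : 2*k+1 - d ≤ k) (htd : t < d) (hd2 : d ≤ 2*k) :
    (0:EuclideanSpace ℝ (Fin 2)) ∈ interior (convexHull ℝ (v '' S)) := by
  set N : ℝ := 2 * (k:ℝ) + 1 with hN
  have hNpos : (0:ℝ) < N := by positivity
  set φ : ℝ := 2 * π * (a.val : ℝ) / N with hφ
  set X : ℝ := 2 * π * (t : ℝ) / N with hX
  set Y : ℝ := 2 * π * (d : ℝ) / N with hY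
  -- the three points
  set P : ℝ → EuclideanSpace ℝ (Fin 2) :=
    fun θ => (WithLp.equiv 2 (Fin 2 → ℝ)).symm ![cos θ, sin θ] with hP
  have hp0 : v a = P φ := by rw [hv a]
  have hp1 : v (a + (t : ZMod (2*k+1))) = P (φ + X) := by
    rw [vshift a t, hP]
    have : 2 * π * ((a.val + t : ℕ) : ℝ) / N = φ + X := by
      push_cast; rw [hφ, hX]; ring
    rw [this]
  have hp2 : v (a + (d : ZMod (2*k+1))) = P (φ + Y) := by
    rw [vshift a d, hP]
    have : 2 * π * ((a.val + d : ℕ) : ℝ) / N = φ + Y := by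
      push_cast; rw [hφ, hY]; ring
    rw [this]
  -- weights
  have sinpos : ∀ g : ℕ, 1 ≤ g → g ≤ k → 0 < sin (2 * π * (g:ℝ) / N) := by
    intro g h1 h2
    apply Real.sin_pos_of_pos_of_lt_pi
    · positivity
    · rw [div_lt_iff₀ hNpos]
      have : (g:ℝ) ≤ k := Nat.cast_le.mpr h2
      nlinarith [Real.pi_pos]
  set w0 : ℝ := sin (Y - X) with hw0
  set w1 : ℝ := sin (2 * π - Y) with hw1
  set w2 : ℝ := sin X with hw2
  have hw0pos : 0 < w0 := by
    have : Y - X = 2 * π * ((d - t : ℕ):ℝ) / N := by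
      rw [Nat.cast_sub htd.le, hX, hY]; ring
    rw [hw0, this]; exact sinpos _ hdt1 hdtk
  have hw1pos : 0 < w1 := by
    have : 2 * π - Y = 2 * π * ((2*k+1 - d : ℕ):ℝ) / N := by
      rw [Nat.cast_sub (by omega), hY]
      push_cast
      field_simp
      ring
    rw [hw1, this]; exact sinpos _ hnd1 hndk
  have hw2pos : 0 < w2 := by
    rw [hw2, hX]; exact sinpos _ ht1 htk
  set W : ℝ := w0 + w1 + w2 with hW
  have hWpos : 0 < W := by positivity
  -- the zero combination
  have hzero : w0 • P φ + w1 • P (φ + X) + w2 • P (φ + Y) = 0 := by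
    ext x
    fin_cases x <;>
    · simp [hP, hw0, hw1, hw2, PiLp.add_apply, PiLp.smul_apply, smul_eq_mul,
        Real.sin_sub, Real.cos_add, Real.sin_add, Real.sin_two_pi_sub]
      ring
  -- coordinate helpers
  have hPapp0 : ∀ θ : ℝ, P θ 0 = cos θ := by intro θ; simp [hP]
  have hPapp1 : ∀ θ : ℝ, P θ 1 = sin θ := by intro θ; simp [hP]
  have hadd : ∀ (r : ℝ) (u w : EuclideanSpace ℝ (Fin 2)) (x : Fin 2),
      (r • u + w) x = r * u x + w x := by
    intro r u w x; simp [PiLp.add_apply, PiLp.smul_apply, smul_eq_mul]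
  -- the triangle
  set q : Fin 3 → EuclideanSpace ℝ (Fin 2) := ![P φ, P (φ + X), P (φ + Y)] with hq
  have hq0 : q 0 = P φ := rfl
  have hq1 : q 1 = P (φ + X) := rfl
  have hq2 : q 2 = P (φ + Y) := rfl
  have hdet : (cos (φ+X) - cos φ) * (sin (φ+Y) - sin φ)
      - (cos (φ+Y) - cos φ) * (sin (φ+X) - sin φ) = W := by
    rw [hW, hw0, hw1, hw2]
    simp only [Real.sin_sub, Real.cos_add, Real.sin_add, Real.sin_two_pi, Real.cos_two_pi]
    linear_combination (cos X * sin Y + sin X - sin X * cos Y - sin Y) *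
      Real.sin_sq_add_cos_sq φ
  have haff : AffineIndependent ℝ q := by
    rw [affineIndependent_iff_not_collinear]
    intro hcol
    obtain ⟨u, hu⟩ := (collinear_iff_of_mem (Set.mem_range_self (0 : Fin 3))).mp hcol
    obtain ⟨r1, hr1⟩ := hu (q 1) (Set.mem_range_self 1)
    obtain ⟨r2, hr2⟩ := hu (q 2) (Set.mem_range_self 2)
    rw [hq0, hq1, vadd_eq_add] at hr1
    rw [hq0, hq2, vadd_eq_add] at hr2
    have c10 : cos (φ+X) = r1 * u 0 + cos φ := by
      rw [← hPapp0, hr1, hadd, hPapp0]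
    have c11 : sin (φ+X) = r1 * u 1 + sin φ := by
      rw [← hPapp1, hr1, hadd, hPapp1]
    have c20 : cos (φ+Y) = r2 * u 0 + cos φ := by
      rw [← hPapp0, hr2, hadd, hPapp0]
    have c21 : sin (φ+Y) = r2 * u 1 + sin φ := by
      rw [← hPapp1, hr2, hadd, hPapp1]
    rw [c10, c11, c20, c21] at hdet
    have : W = 0 := by rw [← hdet]; ring
    linarith
  have hspan : affineSpan ℝ (Set.range q) = ⊤ := by
    rw [haff.affineSpan_eq_top_iff_card_eq_finrank_add_one]
    simp
  set B : AffineBasis (Fin 3) ℝ (EuclideanSpace ℝ (Fin 2)) := ⟨q, haff, hspan⟩ with hB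
  set lam : Fin 3 → ℝ := ![w0 / W, w1 / W, w2 / W] with hlam
  have hsum : Finset.univ.sum lam = 1 := by
    simp [hlam, Fin.sum_univ_three]
    field_simp
    exact hW.symm
  have hcomb : Finset.univ.affineCombination ℝ q lam = (0:EuclideanSpace ℝ (Fin 2)) := by
    rw [Finset.affineCombination_eq_linear_combination _ _ _ hsum]
    rw [Fin.sum_univ_three]
    simp only [hlam, Matrix.cons_val_zero, Matrix.cons_val_one, Matrix.head_cons,
      Matrix.cons_val_two, Matrix.tail_cons]
    rw [hq0, hq1, hq2, div_eq_inv_mul, div_eq_inv_mul, div_eq_inv_mul,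
      ← smul_smul, ← smul_smul, ← smul_smul, ← smul_add, ← smul_add, hzero, smul_zero]
  have hmem : (0:EuclideanSpace ℝ (Fin 2)) ∈ interior (convexHull ℝ (Set.range q)) := by
    have hrg : Set.range (B : Fin 3 → EuclideanSpace ℝ (Fin 2)) = Set.range q := rfl
    rw [← hrg, B.interior_convexHull]
    intro i
    have hco : B.coord i (Finset.univ.affineCombination ℝ q lam) = lam i :=
      B.coord_apply_combination_of_mem (Finset.mem_univ i) hsum
    rw [hcomb] at hco
    rw [hco, hlam]
    clear hco
    fin_cases i
    · exact div_pos hw0pos hWpos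
    · exact div_pos hw1pos hWpos
    · exact div_pos hw2pos hWpos
  have hrange : Set.range q ⊆ v '' S := by
    rintro _ ⟨i, rfl⟩
    fin_cases i
    · exact ⟨a, ha, hp0⟩
    · exact ⟨_, hc, hp1⟩
    · exact ⟨_, hb, hp2⟩
  exact interior_mono (convexHull_mono hrange) hmem

theorem stmt11 {k : ℕ} (hk : 1 ≤ k)
    (v : ZMod (2 * k + 1) → EuclideanSpace ℝ (Fin 2))
    (hv : ∀ j : ZMod (2 * k + 1),
      v j = (WithLp.equiv 2 (Fin 2 → ℝ)).symm
        ![Real.cos (2 * π * (j.val : ℝ) / (2 * (k : ℝ) + 1)),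
          Real.sin (2 * π * (j.val : ℝ) / (2 * (k : ℝ) + 1))]) :
    ∀ S : Set (ZMod (2 * k + 1)), S.Nonempty →
      (0 ∈ intrinsicInterior ℝ (convexHull ℝ (v '' S)) ↔
        ¬ ∃ i : ZMod (2 * k + 1),
          S ⊆ {j : ZMod (2 * k + 1) | ∃ ℓ : ℕ, ℓ ≤ k ∧ j = i + (ℓ : ZMod (2 * k + 1))}) := by
  intro S hS
  have hvs := vshift hk v hv
  constructor
  · intro h0
    rintro ⟨i, hi⟩
    exact easy hk v hv hvs S (intrinsicInterior_subset h0) i hi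
  · intro hnc
    obtain ⟨a, t, d, ha, hc, hb, h1, h2, h3, h4, h5, h6, h7, h8⟩ := comb hk S hS hnc
    exact interior_subset_intrinsicInterior
      (geom hk v hv hvs S a t d ha hc hb h1 h2 h3 h4 h5 h6 h7 h8)
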